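/- The spanned parallelepiped lies in the constraint polytope for a linear connection: in the setting of the explicit Moreau data for a linear connection, with labeling ρ̃_0 < ρ̃_1 < ⋯ < ρ̃_{S−1} and r̃_n = r_{1,i_n+1} strictly smaller than the thresholds of all other edges of chain n, let B_0 = 0 and B_1, …, B_S ∈ V be the points with components √(a_e) B_j^e = ã_n · min{ρ̃_n, ρ̃_{j−1}} for every edge e of chain n. Then the parallelepiped Ω = {Σ_{j=1}^{S} τ_j (B_j − B_{j−1}) : |τ_j| ≤ 1 for all j} is contained in Π ∩ V; moreover, for every edge e of chain n other than the edge (1, i_n+1) and every point v ∈ Ω, the strict inequality √(a_e) |v_e| < r_e holds. -/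

import Mathlib

open MeasureTheory Set

noncomputable section

/-- Edges of a linear connection: chain `n` has `c n + 2` edges, edge `⟨n,0⟩`
is the edge `(1, i_n+1)` and edge `⟨n, c n + 1⟩` is the edge `(i_{n+1}, N)`. -/
def LCEdge (S : ℕ) (c : Fin S → ℕ) : Type := Σ n : Fin S, Fin (c n + 2)

instance (S : ℕ) (c : Fin S → ℕ) : Fintype (LCEdge S c) := by unfold LCEdge; infer_instance

/-- The configuration space `E = ℝ^M` of a linear connection. -/
abbrev LCSp (S : ℕ) (c : Fin S → ℕ) : Type := EuclideanSpace ℝ (LCEdge S c)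

instance (S : ℕ) (c : Fin S → ℕ) : NormedAddCommGroup (LCSp S c) := by
  unfold LCSp; infer_instance

instance (S : ℕ) (c : Fin S → ℕ) : InnerProductSpace ℝ (LCSp S c) := by
  unfold LCSp; infer_instance

/-- Diagonal rescaling map `v ↦ (w e * v e)_e`. -/
def dmulLC {S : ℕ} {c : Fin S → ℕ} (w : LCEdge S c → ℝ) :
    LCSp S c →ₗ[ℝ] LCSp S c where
  toFun v := WithLp.toLp 2 fun e => w e * v e
  map_add' x y := by
    ext e; show w e * (x e + y e) = w e * x e + w e * y e; ring
  map_smul' m x := by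
    ext e; show w e * (m * x e) = m * (w e * x e); ring

/-- The subspace `W` of deformations compatible with the geometric constraints
(at zero input): the sum of deformations along each chain is zero. -/
def WLC (S : ℕ) (c : Fin S → ℕ) : Submodule ℝ (LCSp S c) where
  carrier := {ε | ∀ n : Fin S, ∑ j : Fin (c n + 2), ε ⟨n, j⟩ = 0}
  zero_mem' := fun n => by
    have : ∀ j : Fin (c n + 2), (0 : LCSp S c) ⟨n, j⟩ = 0 := fun j => rfl
    simp [this]
  add_mem' := by
    intro a b ha hb n
    have : ∀ j : Fin (c n + 2), (a + b) (⟨n, j⟩ : LCEdge S c) = a ⟨n, j⟩ + b ⟨n, j⟩ :=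
      fun j => rfl
    simp [this, Finset.sum_add_distrib, ha n, hb n]
  smul_mem' := by
    intro m a ha n
    have : ∀ j : Fin (c n + 2), (m • a) (⟨n, j⟩ : LCEdge S c) = m * a ⟨n, j⟩ :=
      fun j => rfl
    simp [this, ← Finset.mul_sum, ha n]

/-- The subspace `V = A^{-1/2} W^⊥`. -/
def VLC {S : ℕ} {c : Fin S → ℕ} (a : LCEdge S c → ℝ) : Submodule ℝ (LCSp S c) :=
  (WLC S c)ᗮ.map (dmulLC fun e => (Real.sqrt (a e))⁻¹)

/-- The box `C` of admissible stresses. -/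
def CboxLC {S : ℕ} {c : Fin S → ℕ} (r : LCEdge S c → ℝ) : Set (LCSp S c) :=
  {σ | ∀ e, |σ e| ≤ r e}

/-- The rescaled polytope `Π = A^{-1/2} C`. -/
def PiLC {S : ℕ} {c : Fin S → ℕ} (a r : LCEdge S c → ℝ) : Set (LCSp S c) :=
  (dmulLC fun e => (Real.sqrt (a e))⁻¹) '' CboxLC r

/-- The vector `k₀`: component `1` on the edges `(i_n, N)` (the last edge of
each chain), `0` elsewhere. -/
def k0LC (S : ℕ) (c : Fin S → ℕ) : LCSp S c := WithLp.toLp 2 fun e : LCEdge S c =>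
  if (e.2 : ℕ) = c e.1 + 1 then (1 : ℝ) else 0

/-- Effective stiffness `ã_n` of chain `n`. -/
def atilLC {S : ℕ} {c : Fin S → ℕ} (a : LCEdge S c → ℝ) (n : Fin S) : ℝ :=
  (∑ j : Fin (c n + 2), (a ⟨n, j⟩)⁻¹)⁻¹

/-- Effective threshold `r̃_n` of chain `n`. -/
def rtilLC {S : ℕ} {c : Fin S → ℕ} (r : LCEdge S c → ℝ) (n : Fin S) : ℝ :=
  Finset.univ.inf' ⟨⟨0, by omega⟩, Finset.mem_univ _⟩ fun j : Fin (c n + 2) => r ⟨n, j⟩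

/-- The facet `Π_n` of `Π` on which the first edge of chain `n` is at its
positive threshold. -/
def PfaceLC {S : ℕ} {c : Fin S → ℕ} (a r : LCEdge S c → ℝ) (n : Fin S) :
    Set (LCSp S c) :=
  {v ∈ PiLC a r | Real.sqrt (a ⟨n, 0⟩) * v ⟨n, 0⟩ = r ⟨n, 0⟩}

/-- The face `F_j = V ∩ Π_1 ∩ ⋯ ∩ Π_j` of the polytope `Π ∩ V`. -/
def FfaceLC {S : ℕ} {c : Fin S → ℕ} (a r : LCEdge S c → ℝ) (j : ℕ) :
    Set (LCSp S c) :=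
  ↑(VLC a) ∩ PiLC a r ∩ ⋂ (n : Fin S) (_ : (n : ℕ) < j), PfaceLC a r n

/-- The parallelepiped `Ω` spanned by the links of the loading polyline of a
linear connection is contained in the constraint polytope `Π ∩ V`; moreover on
all edges other than the first edge of each chain the constraint is strict. -/
theorem linear_connection_omega_in_polytope
    (S : ℕ) (hS : 1 ≤ S) (c : Fin S → ℕ)
    (a r : LCEdge S c → ℝ) (ha : ∀ e, 0 < a e) (hr : ∀ e, 0 < r e)
    (hord : ∀ n m : Fin S, n < m → rtilLC r n / atilLC a n < rtilLC r m / atilLC a m)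
    (hmin : ∀ n : Fin S, rtilLC r n = r ⟨n, 0⟩ ∧
      ∀ j : Fin (c n + 2), j ≠ 0 → r ⟨n, 0⟩ < r ⟨n, j⟩)
    (B : Fin (S + 1) → LCSp S c) (hB0 : B 0 = 0)
    (hB : ∀ j : Fin (S + 1), 1 ≤ (j : ℕ) → ∀ e : LCEdge S c,
      Real.sqrt (a e) * B j e =
        atilLC a e.1 * min (rtilLC r e.1 / atilLC a e.1)
          (rtilLC r ⟨(j : ℕ) - 1, by have := j.isLt; omega⟩ /
            atilLC a ⟨(j : ℕ) - 1, by have := j.isLt; omega⟩)) :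
    ∀ τ : Fin S → ℝ, (∀ j, |τ j| ≤ 1) →
      (∑ j : Fin S, τ j • (B j.succ - B j.castSucc)) ∈ PiLC a r ∩ ↑(VLC a) ∧
      ∀ e : LCEdge S c, (e.2 : ℕ) ≠ 0 →
        Real.sqrt (a e) * |(∑ j : Fin S, τ j • (B j.succ - B j.castSucc)) e| < r e := by

  intro τ hτ
  set v := ∑ j : Fin S, τ j • (B j.succ - B j.castSucc) with hv
  have hsq : ∀ e : LCEdge S c, 0 < Real.sqrt (a e) := fun e => Real.sqrt_pos.2 (ha e)
  have hatil : ∀ n : Fin S, 0 < atilLC a n := by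
    intro n
    have : 0 < ∑ j : Fin (c n + 2), (a (⟨n, j⟩ : LCEdge S c))⁻¹ :=
      Finset.sum_pos (fun j _ => inv_pos.2 (ha _)) ⟨⟨0, by omega⟩, Finset.mem_univ _⟩
    exact inv_pos.2 this
  have hrtil : ∀ n : Fin S, 0 < rtilLC r n := by
    intro n
    unfold rtilLC
    exact (Finset.lt_inf'_iff _).2 (fun j _ => hr _)
  have hrtil_le : ∀ (n : Fin S) (j : Fin (c n + 2)), rtilLC r n ≤ r ⟨n, j⟩ := by
    intro n j
    exact Finset.inf'_le _ (Finset.mem_univ j)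
  set ρ : Fin S → ℝ := fun n => rtilLC r n / atilLC a n with hρdef
  have hρpos : ∀ n, 0 < ρ n := fun n => div_pos (hrtil n) (hatil n)
  have hρmono : ∀ n m : Fin S, n ≤ m → ρ n ≤ ρ m := by
    intro n m hnm
    rcases lt_or_eq_of_le hnm with h | h
    · exact le_of_lt (hord n m h)
    · rw [h]
  -- the value of √a_e * B j e, depending only on the chain
  set val : Fin S → Fin (S + 1) → ℝ := fun n j =>
    if h : 1 ≤ (j : ℕ) then
      atilLC a n * min (ρ n) (ρ ⟨(j : ℕ) - 1, by have := j.isLt; omega⟩) else 0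
    with hvaldef
  have hval : ∀ (e : LCEdge S c) (j : Fin (S + 1)),
      Real.sqrt (a e) * B j e = val e.1 j := by
    intro e j
    by_cases h : 1 ≤ (j : ℕ)
    · rw [hB j h e]
      simp only [hvaldef, hρdef, dif_pos h]
    · have hj0 : j = 0 := by
        apply Fin.ext
        simpa using Nat.lt_one_iff.mp (show (j : ℕ) < 1 by omega)
      subst hj0
      rw [hB0]
      simp only [hvaldef, dif_neg h]
      have : (0 : LCSp S c) e = 0 := rfl
      rw [this, mul_zero]
  have hval0 : ∀ n, val n 0 = 0 := by
    intro n; simp [hvaldef]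
  have hvalnn : ∀ n j, 0 ≤ val n j := by
    intro n j
    by_cases h : 1 ≤ (j : ℕ)
    · simp only [hvaldef, dif_pos h]
      exact mul_nonneg (le_of_lt (hatil n)) (le_min (le_of_lt (hρpos n)) (le_of_lt (hρpos _)))
    · simp [hvaldef, dif_neg h]
  have hvalle : ∀ n j, val n j ≤ rtilLC r n := by
    intro n j
    by_cases h : 1 ≤ (j : ℕ)
    · simp only [hvaldef, dif_pos h]
      calc atilLC a n * min (ρ n) (ρ ⟨(j : ℕ) - 1, by have := j.isLt; omega⟩)
          ≤ atilLC a n * ρ n := by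
            exact mul_le_mul_of_nonneg_left (min_le_left _ _) (le_of_lt (hatil n))
        _ = rtilLC r n := by
            simp only [hρdef]
            exact mul_div_cancel₀ _ (ne_of_gt (hatil n))
    · simp only [hvaldef, dif_neg h]
      exact le_of_lt (hrtil n)
  have hvalstep : ∀ (n : Fin S) (j : Fin S), val n j.castSucc ≤ val n j.succ := by
    intro n j
    by_cases h : 1 ≤ (j : ℕ)
    · have h1 : 1 ≤ ((j.castSucc : Fin (S+1)) : ℕ) := h
      have h2 : 1 ≤ ((j.succ : Fin (S+1)) : ℕ) := by simp
      simp only [hvaldef, dif_pos h1, dif_pos h2]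
      apply mul_le_mul_of_nonneg_left _ (le_of_lt (hatil n))
      apply min_le_min le_rfl
      apply hρmono
      apply Fin.mk_le_mk.2
      simp only [Fin.coe_castSucc, Fin.val_succ]
      omega
    · have h1 : ¬ 1 ≤ ((j.castSucc : Fin (S+1)) : ℕ) := h
      simp only [hvaldef, dif_neg h1]
      exact hvalnn n j.succ
  -- telescoping sum
  have htel : ∀ n : Fin S,
      ∑ j : Fin S, (val n j.succ - val n j.castSucc) = val n (Fin.last S) := by
    intro n
    set G : ℕ → ℝ := fun k => val n ⟨min k S, by omega⟩ with hGdef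
    have hsummand : ∀ j : Fin S, val n j.succ - val n j.castSucc = G (j + 1) - G j := by
      intro j
      have e1 : (⟨min ((j : ℕ) + 1) S, by omega⟩ : Fin (S + 1)) = j.succ := by
        apply Fin.ext
        simp only [Fin.val_succ]
        omega
      have e2 : (⟨min (j : ℕ) S, by omega⟩ : Fin (S + 1)) = j.castSucc := by
        apply Fin.ext
        simp only [Fin.coe_castSucc]
        omega
      simp only [hGdef, e1, e2]
    rw [Finset.sum_congr rfl (fun j _ => hsummand j), Fin.sum_univ_eq_sum_range
      (fun i => G (i + 1) - G i), Finset.sum_range_sub G]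
    have e3 : (⟨min S S, by omega⟩ : Fin (S + 1)) = Fin.last S := by
      apply Fin.ext
      simp only [Fin.val_last]
      omega
    have e4 : (⟨min 0 S, by omega⟩ : Fin (S + 1)) = 0 := by
      apply Fin.ext
      simp only [Fin.val_zero]
      omega
    simp only [hGdef, e3, e4, hval0 n, sub_zero]
  -- the chain value of √a_e * v e
  set g : Fin S → ℝ := fun n => ∑ j : Fin S, τ j * (val n j.succ - val n j.castSucc)
    with hgdef
  have hkey : ∀ e : LCEdge S c, Real.sqrt (a e) * v e = g e.1 := by
    intro e
    have happ : v e = ∑ j : Fin S, τ j * (B j.succ e - B j.castSucc e) := by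
      have h1 : v e = ∑ j : Fin S, (τ j • (B j.succ - B j.castSucc)) e :=
        map_sum (EuclideanSpace.proj e) (fun j : Fin S => τ j • (B j.succ - B j.castSucc))
          Finset.univ
      rw [h1]
      exact Finset.sum_congr rfl fun j _ => rfl
    rw [happ, Finset.mul_sum, hgdef]
    apply Finset.sum_congr rfl
    intro j _
    rw [← hval e j.succ, ← hval e j.castSucc]
    ring
  have hgbound : ∀ n : Fin S, |g n| ≤ rtilLC r n := by
    intro n
    calc |g n| ≤ ∑ j : Fin S, |τ j * (val n j.succ - val n j.castSucc)| :=
          Finset.abs_sum_le_sum_abs _ _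
      _ ≤ ∑ j : Fin S, (val n j.succ - val n j.castSucc) := by
          apply Finset.sum_le_sum
          intro j _
          rw [abs_mul, abs_of_nonneg (sub_nonneg.2 (hvalstep n j))]
          calc |τ j| * (val n j.succ - val n j.castSucc)
              ≤ 1 * (val n j.succ - val n j.castSucc) :=
                mul_le_mul_of_nonneg_right (hτ j) (sub_nonneg.2 (hvalstep n j))
            _ = _ := one_mul _
      _ = val n (Fin.last S) := htel n
      _ ≤ rtilLC r n := hvalle n _
  have habs : ∀ e : LCEdge S c, Real.sqrt (a e) * |v e| ≤ rtilLC r e.1 := by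
    intro e
    rw [← abs_of_nonneg (le_of_lt (hsq e)), ← abs_mul, hkey e]
    exact hgbound e.1
  constructor
  · constructor
    · -- v ∈ PiLC a r
      refine ⟨WithLp.toLp 2 fun e => Real.sqrt (a e) * v e, ?_, ?_⟩
      · intro e
        calc |Real.sqrt (a e) * v e| = Real.sqrt (a e) * |v e| := by
              rw [abs_mul, abs_of_nonneg (le_of_lt (hsq e))]
          _ ≤ rtilLC r e.1 := habs e
          _ ≤ r e := by
              have := hrtil_le e.1 e.2
              rwa [Sigma.eta e] at this
      · ext e
        show (Real.sqrt (a e))⁻¹ * (Real.sqrt (a e) * v e) = v e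
        rw [inv_mul_cancel_left₀ (ne_of_gt (hsq e))]
    · -- v ∈ VLC a
      refine ⟨WithLp.toLp 2 fun e => g e.1, ?_, ?_⟩
      · rw [SetLike.mem_coe, Submodule.mem_orthogonal]
        intro u hu
        have hu' : ∀ n : Fin S, ∑ j : Fin (c n + 2), u ⟨n, j⟩ = 0 := hu
        have : (inner ℝ u (WithLp.toLp 2 fun e : LCEdge S c => g e.1) : ℝ)
            = ∑ e : LCEdge S c, u e * g e.1 := by
          simp [PiLp.inner_apply, RCLike.inner_apply]
          exact Finset.sum_congr rfl fun _ _ => mul_comm _ _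
        have hsum : ∀ f : (Σ n : Fin S, Fin (c n + 2)) → ℝ,
            ∑ e : Σ n : Fin S, Fin (c n + 2), f e
              = ∑ n : Fin S, ∑ j : Fin (c n + 2), f ⟨n, j⟩ := by
          intro f
          rw [← Finset.univ_sigma_univ, Finset.sum_sigma]
        have h2 : ∑ e : LCEdge S c, u e * g e.1
            = ∑ n : Fin S, ∑ j : Fin (c n + 2), u ⟨n, j⟩ * g n :=
          hsum fun e => u e * g e.1
        rw [this, h2]
        apply Finset.sum_eq_zero
        intro n _
        rw [← Finset.sum_mul, hu' n, zero_mul]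
      · ext e
        show (Real.sqrt (a e))⁻¹ * g e.1 = v e
        rw [← hkey e, inv_mul_cancel_left₀ (ne_of_gt (hsq e))]
  · intro e he
    calc Real.sqrt (a e) * |v e| ≤ rtilLC r e.1 := habs e
      _ = r ⟨e.1, 0⟩ := (hmin e.1).1
      _ < r ⟨e.1, e.2⟩ := (hmin e.1).2 e.2 (by
          intro h0
          exact he (by rw [h0]; rfl))
      _ = r e := by rw [Sigma.eta e]

end
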